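/- Local Markov property from factorisation: let V = {X₁,…,Xₙ} be finite sets, G a DAG on indices {1,…,n}, and suppose P(x₁,…,xₙ) = ∏ᵢ cᵢ(xᵢ | pa_i) where each cᵢ is a probability channel from the product of the parents of i in G to Xᵢ. Then for each i, Xᵢ is conditionally independent of its nondescendants-excluding-parents given its parents: (Xᵢ ⫫ Nd(Xᵢ)∖Pa(Xᵢ) | Pa(Xᵢ))_P. -/

import Mathlib

open scoped NNReal

/-- The parents of `i` in the directed graph with edge relation `E` (an edge `j → i` is
`E j i`). -/
def parents {ι : Type*} [Fintype ι] (E : ι → ι → Prop) [DecidableRel E] (i : ι) :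
    Finset ι :=
  Finset.univ.filter fun j => E j i

/-- The nondescendants of `i`: the vertices `j` with no directed path `i → ⋯ → j`
(this includes `i` itself, which is excluded separately below). -/
def nonDesc {ι : Type*} [Fintype ι] (E : ι → ι → Prop)
    [DecidableRel (Relation.TransGen E)] (i : ι) : Finset ι :=
  Finset.univ.filter fun j => ¬ Relation.TransGen E i j

/-- The marginal of `P` on the coordinates in `T`, evaluated at `v`:
sum of `P w` over all assignments `w` agreeing with `v` on `T`. -/
noncomputable def margin {ι : Type*} [Fintype ι] [DecidableEq ι] {X : ι → Type*}
    [∀ i, Fintype (X i)] [∀ i, DecidableEq (X i)]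
    (P : (∀ j, X j) → ℝ≥0) (T : Finset ι) (v : ∀ j, X j) : ℝ≥0 :=
  ∑ w : ∀ j, X j, if ∀ j ∈ T, w j = v j then P w else 0

section Aux

variable {ι : Type*} [Fintype ι] [DecidableEq ι] {X : ι → Type*}
    [∀ i, Fintype (X i)] [∀ i, DecidableEq (X i)] (P : (∀ j, X j) → ℝ≥0)

lemma margin_univ (v : ∀ j, X j) : margin P Finset.univ v = P v := by
  unfold margin
  have h : ∀ w : ∀ j, X j, (∀ j ∈ Finset.univ, w j = v j) ↔ w = v := by
    intro w
    constructor
    · intro h; funext j; exact h j (Finset.mem_univ j)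
    · intro h j _; rw [h]
  simp only [h]
  simp

lemma margin_insert_sum (T : Finset ι) (m : ι) (hm : m ∉ T) (v : ∀ j, X j) :
    margin P T v = ∑ x : X m, margin P (insert m T) (Function.update v m x) := by
  unfold margin
  rw [Finset.sum_comm]
  apply Finset.sum_congr rfl
  intro w _
  have key : ∀ x : X m,
      (if ∀ j ∈ insert m T, w j = Function.update v m x j then P w else 0)
        = if x = w m then (if ∀ j ∈ T, w j = v j then P w else 0) else 0 := by
    intro x
    by_cases hx : x = w m
    · subst hx
      rw [if_pos rfl]
      have hiff : (∀ j ∈ insert m T, w j = Function.update v m (w m) j)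
          ↔ (∀ j ∈ T, w j = v j) := by
        constructor
        · intro h j hj
          have hjm : j ≠ m := fun hjm => hm (hjm ▸ hj)
          have := h j (Finset.mem_insert_of_mem hj)
          rwa [Function.update_of_ne hjm _ _] at this
        · intro h j hj
          rcases Finset.mem_insert.mp hj with rfl | hj
          · simp
          · have hjm : j ≠ m := fun hjm => hm (hjm ▸ hj)
            rw [Function.update_of_ne hjm _ _]
            exact h j hj
      exact if_congr hiff rfl rfl
    · rw [if_neg hx, if_neg]
      intro h
      have := h m (Finset.mem_insert_self m T)
      simp at this
      exact hx this.symm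
  simp only [key]
  simp

lemma margin_mono (T T' : Finset ι) (h : T ⊆ T') (v : ∀ j, X j) :
    margin P T' v ≤ margin P T v := by
  unfold margin
  apply Finset.sum_le_sum
  intro w _
  by_cases hw : ∀ j ∈ T', w j = v j
  · rw [if_pos hw, if_pos (fun j hj => hw j (h hj))]
  · rw [if_neg hw]
    exact zero_le'

variable (E : ι → ι → Prop) [DecidableRel E] [DecidableRel (Relation.TransGen E)]
    (hacyc : ∀ i, ¬ Relation.TransGen E i i)
    (c : (i : ι) → (∀ j, X j) → X i → ℝ≥0)
    (hloc : ∀ i (v v' : ∀ j, X j), (∀ j, E j i → v j = v' j) → c i v = c i v')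
    (hchan : ∀ i (v : ∀ j, X j), ∑ x : X i, c i v x = 1)
    (hP : ∀ v, P v = ∏ i, c i v (v i))

set_option linter.unusedSectionVars false

include hacyc hloc hchan hP in
lemma margin_closed (S : Finset ι) (hS : ∀ j ∈ S, ∀ k, E k j → k ∈ S)
    (v : ∀ j, X j) : margin P S v = ∏ j ∈ S, c j v (v j) := by
  haveI : IsTrans ι (Relation.TransGen E) := ⟨fun _ _ _ => Relation.TransGen.trans⟩
  haveI : IsIrrefl ι (Relation.TransGen E) := ⟨hacyc⟩
  have wf : WellFounded (Relation.TransGen E) :=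
    Finite.wellFounded_of_trans_of_irrefl _
  suffices H : ∀ n (S : Finset ι), (Finset.univ \ S).card = n →
      (∀ j ∈ S, ∀ k, E k j → k ∈ S) → ∀ v, margin P S v = ∏ j ∈ S, c j v (v j) by
    exact H _ S rfl hS v
  intro n
  induction n using Nat.strong_induction_on with
  | _ n ih =>
    intro S hcard hS v
    by_cases hSu : S = Finset.univ
    · subst hSu
      rw [margin_univ, hP]
    · have hne : (Finset.univ \ S).Nonempty := by
        rw [Finset.sdiff_nonempty]
        intro h
        exact hSu (Finset.univ_subset_iff.mp h)
      obtain ⟨m, hmT, hmin⟩ := wf.has_min (↑(Finset.univ \ S) : Set ι)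
        ⟨hne.choose, by exact_mod_cast hne.choose_spec⟩
      have hmS : m ∉ S := by
        have := Finset.mem_coe.mp hmT
        simp only [Finset.mem_sdiff] at this
        exact this.2
      have hclosed : ∀ j ∈ insert m S, ∀ k, E k j → k ∈ insert m S := by
        intro j hj k hk
        rcases Finset.mem_insert.mp hj with rfl | hj
        · by_cases hkS : k ∈ S
          · exact Finset.mem_insert_of_mem hkS
          · exfalso
            exact hmin k (by simp [Finset.mem_sdiff, hkS]) (Relation.TransGen.single hk)
        · exact Finset.mem_insert_of_mem (hS j hj k hk)
      have hcard' : (Finset.univ \ insert m S).card < n := by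
        have h1 : Finset.univ \ insert m S = (Finset.univ \ S).erase m := by
          ext a; simp [Finset.mem_sdiff, Finset.mem_erase, and_comm, not_or]
        rw [h1, ← hcard]
        exact Finset.card_erase_lt_of_mem (by simpa using hmS)
      rw [margin_insert_sum P S m hmS v]
      have step : ∀ x : X m,
          margin P (insert m S) (Function.update v m x)
            = c m v x * ∏ j ∈ S, c j v (v j) := by
        intro x
        rw [ih _ hcard' (insert m S) rfl hclosed]
        rw [Finset.prod_insert hmS]
        congr 1
        · have : c m (Function.update v m x) = c m v := by
            apply hloc
            intro j hj
            have hjS : j ∈ S := by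
              by_contra hjS
              exact hmin j (by simp [Finset.mem_sdiff, hjS]) (Relation.TransGen.single hj)
            have hjm : j ≠ m := fun h => hmS (h ▸ hjS)
            exact Function.update_of_ne hjm _ _
          rw [this, Function.update_self]
        · apply Finset.prod_congr rfl
          intro j hj
          have hjm : j ≠ m := fun h => hmS (h ▸ hj)
          have h1 : c j (Function.update v m x) = c j v := by
            apply hloc
            intro k hk
            have hkS : k ∈ S := hS j hj k hk
            have hkm : k ≠ m := fun h => hmS (h ▸ hkS)
            exact Function.update_of_ne hkm _ _
          rw [h1, Function.update_of_ne hjm _ _]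
      simp only [step]
      rw [← Finset.sum_mul, hchan m v, one_mul]

include hacyc hloc hchan hP in
lemma margin_insert_vertex (i : ι) (T : Finset ι)
    (hPaT : parents E i ⊆ T) (hT : T ⊆ (nonDesc E i).erase i) (v : ∀ j, X j) :
    margin P (insert i T) v = c i v (v i) * margin P T v := by
  have hiN : i ∈ nonDesc E i := by simp [nonDesc, hacyc i]
  have hNclosed : ∀ j ∈ nonDesc E i, ∀ k, E k j → k ∈ nonDesc E i := by
    intro j hj k hk
    simp only [nonDesc, Finset.mem_filter, Finset.mem_univ, true_and] at *
    intro htg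
    exact hj (htg.tail hk)
  have hEclosed : ∀ j ∈ (nonDesc E i).erase i, ∀ k, E k j → k ∈ (nonDesc E i).erase i := by
    intro j hj k hk
    rw [Finset.mem_erase] at hj ⊢
    refine ⟨fun hki => ?_, hNclosed j hj.2 k hk⟩
    have htg : Relation.TransGen E i j := Relation.TransGen.single (hki ▸ hk)
    have hj2 : j ∈ nonDesc E i := hj.2
    simp only [nonDesc, Finset.mem_filter, Finset.mem_univ, true_and] at hj2
    exact hj2 htg
  suffices H : ∀ n (T : Finset ι), ((nonDesc E i).erase i \ T).card = n →
      parents E i ⊆ T → T ⊆ (nonDesc E i).erase i → ∀ v,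
      margin P (insert i T) v = c i v (v i) * margin P T v by
    exact H _ T rfl hPaT hT v
  intro n
  induction n using Nat.strong_induction_on with
  | _ n ih =>
    intro T hcard hPaT hT v
    by_cases hTe : T = (nonDesc E i).erase i
    · subst hTe
      rw [Finset.insert_erase hiN]
      rw [margin_closed P E hacyc c hloc hchan hP _ hNclosed v,
        margin_closed P E hacyc c hloc hchan hP _ hEclosed v]
      exact (Finset.mul_prod_erase (nonDesc E i) (fun j => c j v (v j)) hiN).symm
    · have hne : ((nonDesc E i).erase i \ T).Nonempty := by
        rw [Finset.sdiff_nonempty]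
        intro h
        exact hTe (Finset.Subset.antisymm hT h)
      obtain ⟨m, hm⟩ := hne
      rw [Finset.mem_sdiff] at hm
      have hmi : m ≠ i := (Finset.mem_erase.mp hm.1).1
      have hmiT : m ∉ insert i T := by
        simp only [Finset.mem_insert, not_or]
        exact ⟨hmi, hm.2⟩
      have hcard' : ((nonDesc E i).erase i \ insert m T).card < n := by
        have h1 : (nonDesc E i).erase i \ insert m T
            = ((nonDesc E i).erase i \ T).erase m := by
          ext a
          simp [Finset.mem_sdiff, Finset.mem_erase, not_or, and_comm]
          tauto
        rw [h1, ← hcard]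
        exact Finset.card_erase_lt_of_mem (Finset.mem_sdiff.mpr hm)
      have hPaT' : parents E i ⊆ insert m T := hPaT.trans (Finset.subset_insert m T)
      have hT' : insert m T ⊆ (nonDesc E i).erase i :=
        Finset.insert_subset hm.1 hT
      rw [margin_insert_sum P (insert i T) m hmiT v]
      have step : ∀ x : X m,
          margin P (insert m (insert i T)) (Function.update v m x)
            = c i v (v i) * margin P (insert m T) (Function.update v m x) := by
        intro x
        rw [Finset.insert_comm]
        rw [ih _ hcard' (insert m T) rfl hPaT' hT' (Function.update v m x)]
        congr 1
        have h1 : c i (Function.update v m x) = c i v := by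
          apply hloc
          intro j hj
          have hjPa : j ∈ parents E i := by simp [parents, hj]
          have hjm : j ≠ m := fun h => hm.2 (h ▸ hPaT hjPa)
          exact Function.update_of_ne hjm _ _
        rw [h1, Function.update_of_ne hmi.symm _ _]
      simp only [step]
      rw [← Finset.mul_sum, ← margin_insert_sum P T m hm.2 v]

end Aux

/-- Local Markov property from factorisation: if the joint distribution `P` on
`∏ i, X i` factorises as `P(v) = ∏ i, cᵢ(vᵢ | pa_i(v))` over a DAG with edge relation
`E`, where each `cᵢ` is a probability channel depending only on the parents of `i`, then
each `Xᵢ` is conditionally independent of its nondescendants-excluding-parents given its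
parents, with conditional independence expressed via ratios of marginals (division by
zero giving zero, as in `ℝ≥0`). -/
theorem local_markov_of_factorisation {ι : Type*} [Fintype ι] [DecidableEq ι]
    (E : ι → ι → Prop) [DecidableRel E] [DecidableRel (Relation.TransGen E)]
    (hacyc : ∀ i, ¬ Relation.TransGen E i i)
    (X : ι → Type*) [∀ i, Fintype (X i)] [∀ i, DecidableEq (X i)]
    (c : (i : ι) → (∀ j, X j) → X i → ℝ≥0)
    (hloc : ∀ i (v v' : ∀ j, X j), (∀ j, E j i → v j = v' j) → c i v = c i v')
    (hchan : ∀ i (v : ∀ j, X j), ∑ x : X i, c i v x = 1)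
    (P : (∀ j, X j) → ℝ≥0)
    (hP : ∀ v, P v = ∏ i, c i v (v i))
    (i : ι) :
    ∀ v : ∀ j, X j,
      margin P (insert i ((nonDesc E i \ insert i (parents E i)) ∪ parents E i)) v
          / margin P (parents E i) v
        = (margin P (insert i (parents E i)) v / margin P (parents E i) v)
          * (margin P ((nonDesc E i \ insert i (parents E i)) ∪ parents E i) v
              / margin P (parents E i) v) := by
  intro v
  have hE1 : ∀ j, E j i → ¬ Relation.TransGen E i j := by
    intro j hj htg
    exact hacyc i (htg.tail hj)
  have hE2 : ∀ j, E j i → j ≠ i := by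
    rintro j hj rfl
    exact hacyc j (Relation.TransGen.single hj)
  have hset1 : (nonDesc E i \ insert i (parents E i)) ∪ parents E i
      = (nonDesc E i).erase i := by
    ext j
    simp only [Finset.mem_union, Finset.mem_sdiff, Finset.mem_insert, Finset.mem_erase,
      nonDesc, parents, Finset.mem_filter, Finset.mem_univ, true_and, not_or]
    constructor
    · rintro (⟨h1, h2, h3⟩ | h)
      · exact ⟨h2, h1⟩
      · exact ⟨hE2 j h, hE1 j h⟩
    · rintro ⟨h1, h2⟩
      by_cases h3 : E j i
      · exact Or.inr h3
      · exact Or.inl ⟨h2, h1, h3⟩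
  have hiN : i ∈ nonDesc E i := by simp [nonDesc, hacyc i]
  have hPasub : parents E i ⊆ (nonDesc E i).erase i := by
    intro j hj
    simp only [parents, Finset.mem_filter, Finset.mem_univ, true_and] at hj
    rw [Finset.mem_erase]
    exact ⟨hE2 j hj, by simp [nonDesc, hE1 j hj]⟩
  rw [hset1]
  have h1 : margin P (insert i ((nonDesc E i).erase i)) v
      = c i v (v i) * margin P ((nonDesc E i).erase i) v :=
    margin_insert_vertex P E hacyc c hloc hchan hP i _ hPasub (le_refl _) v
  have h2 : margin P (insert i (parents E i)) v
      = c i v (v i) * margin P (parents E i) v :=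
    margin_insert_vertex P E hacyc c hloc hchan hP i _ (le_refl _) hPasub v
  rw [h1, h2]
  set d := margin P (parents E i) v with hd
  set M := margin P ((nonDesc E i).erase i) v with hM
  by_cases hd0 : d = 0
  · simp [hd0]
  · rw [mul_div_cancel_right₀ _ hd0, mul_div_assoc]
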